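/- For a nonempty closed set K ⊆ ℝ^3, the function y ↦ ½ dist(y, K)² is differentiable at every y admitting a unique closest point p(y) ∈ K, with gradient y - p(y). -/

import Mathlib

open Metric

/-- Nearest points to `z` converge to `p` as `z → y`, when `p` is the unique
nearest point to `y`. -/
lemma nearest_close (K : Set (EuclideanSpace ℝ (Fin 3)))
    (hKc : IsClosed K)
    (y p : EuclideanSpace ℝ (Fin 3))
    (hp : p ∈ K) (hd : dist y p = infDist y K)
    (huniq : ∀ q ∈ K, dist y q = infDist y K → q = p)
    {ε : ℝ} (hε : 0 < ε) :
    ∃ δ > 0, ∀ z q, dist z y < δ → q ∈ K → dist z q = infDist z K →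
      dist q p < ε := by
  set S : Set (EuclideanSpace ℝ (Fin 3)) :=
    {q | q ∈ K ∧ dist q y ≤ infDist y K + 1 ∧ ε ≤ dist q p} with hS
  have hSc : IsClosed S := by
    apply IsClosed.inter hKc
    apply IsClosed.inter
    · exact isClosed_le (continuous_id.dist continuous_const) continuous_const
    · exact isClosed_le continuous_const (continuous_id.dist continuous_const)
  have hScomp : IsCompact S := by
    refine (isCompact_closedBall y (infDist y K + 1)).of_isClosed_subset hSc ?_
    intro q hq
    exact mem_closedBall.2 hq.2.1
  -- common bound: if dist z y < min δ' (1/2), nearest point q satisfies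
  -- dist q y ≤ infDist y K + 2 * dist z y
  have key : ∀ z q, q ∈ K → dist z q = infDist z K →
      dist q y ≤ infDist y K + 2 * dist z y := by
    intro z q hqK hq
    have h1 : infDist z K ≤ infDist y K + dist z y := infDist_le_infDist_add_dist
    calc dist q y ≤ dist q z + dist z y := dist_triangle _ _ _
      _ = infDist z K + dist z y := by rw [dist_comm q z, hq]
      _ ≤ infDist y K + 2 * dist z y := by linarith
  rcases S.eq_empty_or_nonempty with hSe | hSne
  · refine ⟨1/2, by norm_num, fun z q hz hqK hq => ?_⟩
    by_contra h
    push_neg at h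
    have : q ∈ S := ⟨hqK, by have := key z q hqK hq; linarith, h⟩
    rw [hSe] at this
    exact this
  · obtain ⟨q₀, hq₀S, hq₀min⟩ := hScomp.exists_isMinOn (f := fun q => dist y q) hSne
      ((continuous_const.dist continuous_id).continuousOn)
    have hq₀gt : infDist y K < dist y q₀ := by
      rcases lt_or_eq_of_le (infDist_le_dist_of_mem hq₀S.1) with h | h
      · exact h
      · exfalso
        have heq := huniq q₀ hq₀S.1 h.symm
        obtain ⟨-, -, h3⟩ := hq₀S
        rw [heq, dist_self] at h3
        linarith
    set η := dist y q₀ - infDist y K with hη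
    have hηpos : 0 < η := by simp [hη]; linarith
    refine ⟨min (η/2) (1/2), lt_min (by linarith) (by norm_num), fun z q hz hqK hq => ?_⟩
    have hz1 : dist z y < η/2 := lt_of_lt_of_le hz (min_le_left _ _)
    have hz2 : dist z y < 1/2 := lt_of_lt_of_le hz (min_le_right _ _)
    by_contra h
    push_neg at h
    have hqS : q ∈ S := ⟨hqK, by have := key z q hqK hq; linarith, h⟩
    have := hq₀min hqS
    simp only [Set.mem_setOf_eq] at this
    have hbd := key z q hqK hq
    rw [dist_comm q y] at hbd
    linarith [this]

/-- For a nonempty closed `K ⊆ ℝ³`, the function `y ↦ ½ dist(y,K)²` is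
differentiable at every point `y` admitting a unique closest point `p ∈ K`,
with gradient `y - p`. -/
theorem stmt_5 (K : Set (EuclideanSpace ℝ (Fin 3)))
    (hK : K.Nonempty) (hKc : IsClosed K)
    (y p : EuclideanSpace ℝ (Fin 3))
    (hp : p ∈ K) (hd : dist y p = infDist y K)
    (huniq : ∀ q ∈ K, dist y q = infDist y K → q = p) :
    HasGradientAt (fun z => (1 / 2 : ℝ) * infDist z K ^ 2) (y - p) y := by
  rw [hasGradientAt_iff_hasFDerivAt]
  refine HasFDerivAtFilter.of_isLittleO ?_
  rw [Asymptotics.isLittleO_iff]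
  intro c hc
  obtain ⟨δ, hδpos, hδ⟩ := nearest_close K hKc y p hp hd huniq hc
  rw [Filter.prod_pure, Filter.eventually_map]
  dsimp only
  rw [Metric.eventually_nhds_iff]
  refine ⟨min δ (2*c), lt_min hδpos (by linarith), fun z hz => ?_⟩
  have hz1 : dist z y < δ := lt_of_lt_of_le hz (min_le_left _ _)
  have hz2 : dist z y < 2*c := lt_of_lt_of_le hz (min_le_right _ _)
  obtain ⟨q, hqK, hq⟩ := hKc.exists_infDist_eq_dist hK z
  have hq' : dist z q = infDist z K := hq.symm
  have hqp : dist q p < c := hδ z q hz1 hqK hq'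
  simp only [InnerProductSpace.toDual_apply_apply]
  set E : ℝ := (1/2) * infDist z K ^ 2 - (1/2) * infDist y K ^ 2
      - (inner ℝ (y - p) (z - y) : ℝ) with hE
  have hnorm : ∀ a b : EuclideanSpace ℝ (Fin 3), dist a b = ‖a - b‖ := fun a b =>
    dist_eq_norm a b
  -- upper bound
  have hup : E ≤ (1/2) * ‖z - y‖^2 := by
    have h1 : infDist z K ≤ dist z p := infDist_le_dist_of_mem hp
    have h1' : (1/2) * infDist z K ^2 ≤ (1/2) * dist z p ^2 := by
      have := infDist_nonneg (x := z) (s := K)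
      nlinarith
    have hexp : dist z p ^ 2 = ‖z - y‖^2 + 2 * (inner ℝ (z-y) (y-p) : ℝ) + dist y p ^2 := by
      rw [hnorm, hnorm]
      have : z - p = (z - y) + (y - p) := by abel
      rw [this, norm_add_sq_real]
    have hcomm : (inner ℝ (y-p) (z-y) : ℝ) = (inner ℝ (z-y) (y-p) : ℝ) := real_inner_comm _ _
    rw [hE, ← hd]
    nlinarith [hexp]
  -- lower bound
  have hlo : -(c * ‖z - y‖) ≤ E := by
    have h1 : infDist y K ≤ dist y q := infDist_le_dist_of_mem hqK
    have h1' : (1/2) * infDist y K ^2 ≤ (1/2) * dist y q ^2 := by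
      have := infDist_nonneg (x := y) (s := K)
      nlinarith
    have hexp : dist z q ^ 2 = ‖z - y‖^2 + 2 * (inner ℝ (z-y) (y-q) : ℝ) + dist y q ^2 := by
      rw [hnorm, hnorm]
      have : z - q = (z - y) + (y - q) := by abel
      rw [this, norm_add_sq_real]
    have hsplit : (inner ℝ (z-y) (y-q) : ℝ) - (inner ℝ (y-p) (z-y) : ℝ)
        = (inner ℝ (z-y) (p-q) : ℝ) := by
      have hc1 : (inner ℝ (y-p) (z-y) : ℝ) = (inner ℝ (z-y) (y-p) : ℝ) := real_inner_comm _ _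
      rw [hc1]
      simp only [inner_sub_right]
      ring
    have hcs : |(inner ℝ (z-y) (p-q) : ℝ)| ≤ ‖z-y‖ * ‖p-q‖ := abs_real_inner_le_norm _ _
    have hpq : ‖p - q‖ < c := by rw [← dist_eq_norm, dist_comm]; exact hqp
    have hzy : (0:ℝ) ≤ ‖z - y‖ := norm_nonneg _
    have h2 : (inner ℝ (z-y) (p-q) : ℝ) ≥ -(c * ‖z-y‖) := by
      have := neg_abs_le (inner ℝ (z-y) (p-q) : ℝ)
      nlinarith
    rw [hE, ← hq']
    have hsq : (0:ℝ) ≤ ‖z - y‖^2 := sq_nonneg _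
    linarith [hexp, h1', h2, hsplit]
  have habs : |E| ≤ c * ‖z - y‖ := by
    rw [abs_le]
    constructor
    · linarith
    · have hzy : dist z y = ‖z - y‖ := dist_eq_norm z y
      rw [hzy] at hz2
      have hzn : (0:ℝ) ≤ ‖z - y‖ := norm_nonneg _
      have hmul : ‖z - y‖ * ‖z - y‖ ≤ 2 * c * ‖z - y‖ :=
        mul_le_mul_of_nonneg_right hz2.le hzn
      calc E ≤ 1/2 * ‖z - y‖ ^ 2 := hup
        _ = 1/2 * (‖z - y‖ * ‖z - y‖) := by ring
        _ ≤ 1/2 * (2 * c * ‖z - y‖) := by linarith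
        _ = c * ‖z - y‖ := by ring
  calc ‖(1/2) * infDist z K ^ 2 - (1/2) * infDist y K ^ 2 - (inner ℝ (y - p) (z - y) : ℝ)‖
      = |E| := by rw [← hE, Real.norm_eq_abs]
    _ ≤ c * ‖z - y‖ := habs
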